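/- Define f(k', k'') = ∑_{(S,T)} (-1)^{|supp|} where the sum ranges over all k ≥ max(k',k'') and all pairs of subsets S, T ⊆ Fin k with |S| = k', |T| = k'', S ∪ T = Fin k, and the summand is (-1)^k. Then f(k', k'') = (-1)^{k' + k''} for all nonnegative integers k', k''. -/

import Mathlib

open Finset

/-- Coefficients of `(1 - X)^a` in `ℤ⟦X⟧`. -/
lemma coeff_one_sub_X_pow (a j : ℕ) :
    (PowerSeries.coeff j) ((1 - PowerSeries.X) ^ a)
      = (-1) ^ j * (a.choose j : ℤ) := by
  induction a generalizing j with
  | zero =>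
    cases j with
    | zero => simp
    | succ j => simp [Nat.choose_eq_zero_of_lt (Nat.succ_pos j)]
  | succ a ih =>
    have h : (1 - PowerSeries.X : PowerSeries ℤ) ^ (a + 1)
        = (1 - PowerSeries.X) ^ a - (1 - PowerSeries.X) ^ a * PowerSeries.X := by
      ring
    rw [h, map_sub, ih]
    cases j with
    | zero => simp
    | succ j =>
      rw [PowerSeries.coeff_succ_mul_X, ih, Nat.choose_succ_succ (a) (j)]
      push_cast
      ring

/-- Key power-series identity: `mk (C(a+n,a)) * (1-X)^a = mk 1`. -/
lemma mk_choose_mul_one_sub_pow (a : ℕ) :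
    (PowerSeries.mk fun n => ((a + n).choose a : ℤ)) * (1 - PowerSeries.X) ^ a
      = PowerSeries.mk 1 := by
  have h2 := PowerSeries.mk_add_choose_mul_one_sub_pow_eq_one ℤ a
  have h3 : ((1 : PowerSeries ℤ) - PowerSeries.X) * PowerSeries.mk 1 = 1 := by
    rw [mul_comm]; exact PowerSeries.mk_one_mul_one_sub_eq_one ℤ
  calc (PowerSeries.mk fun n => ((a + n).choose a : ℤ)) * (1 - PowerSeries.X) ^ a
      = (PowerSeries.mk fun n => ((a + n).choose a : ℤ)) * (1 - PowerSeries.X) ^ a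
        * (((1 : PowerSeries ℤ) - PowerSeries.X) * PowerSeries.mk 1) := by
        rw [h3, mul_one]
    _ = ((PowerSeries.mk fun n => ((a + n).choose a : ℤ)) * (1 - PowerSeries.X) ^ (a + 1))
        * PowerSeries.mk 1 := by
        rw [pow_succ]; ring
    _ = PowerSeries.mk 1 := by rw [h2, one_mul]

/-- The alternating Vandermonde-type identity. -/
lemma key_antidiagonal (a b : ℕ) :
    ∑ ij ∈ Finset.HasAntidiagonal.antidiagonal b,
        (((a + ij.1).choose a : ℤ)) * ((-1) ^ ij.2 * (a.choose ij.2 : ℤ)) = 1 := by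
  have h := congrArg (PowerSeries.coeff b) (mk_choose_mul_one_sub_pow a)
  rw [PowerSeries.coeff_mul] at h
  simp only [PowerSeries.coeff_mk, coeff_one_sub_X_pow, Pi.one_apply] at h
  exact h

/-- The integer identity. -/
lemma int_identity (a b : ℕ) :
    ∑ k ∈ Finset.Icc (max a b) (a + b),
        (-1 : ℤ) ^ k * ((k.choose a : ℤ) * (a.choose (a + b - k) : ℤ))
      = (-1) ^ (a + b) := by
  have hsub : Finset.Icc (max a b) (a + b) ⊆ Finset.Icc a (a + b) := by
    apply Finset.Icc_subset_Icc (le_max_left a b) le_rfl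
  rw [Finset.sum_subset hsub (by
    intro k hk hk'
    simp only [Finset.mem_Icc] at hk hk'
    have : a + b - k > a := by omega
    rw [Nat.choose_eq_zero_of_lt this]
    simp)]
  have hIcc : Finset.Icc a (a + b) = Finset.Ico a (a + b + 1) := by
    ext x
    simp only [Finset.mem_Icc, Finset.mem_Ico]
    omega
  rw [hIcc, Finset.sum_Ico_eq_sum_range]
  have hrange : a + b + 1 - a = b + 1 := by omega
  rw [hrange]
  have hkey := key_antidiagonal a b
  rw [Finset.Nat.sum_antidiagonal_eq_sum_range_succ_mk] at hkey
  calc ∑ i ∈ Finset.range (b + 1),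
        (-1 : ℤ) ^ (a + i) * (((a + i).choose a : ℤ) * (a.choose (a + b - (a + i)) : ℤ))
      = ∑ i ∈ Finset.range (b + 1),
        (-1 : ℤ) ^ (a + b) * (((a + i).choose a : ℤ) * ((-1) ^ (b - i) * (a.choose (b - i) : ℤ))) := by
        apply Finset.sum_congr rfl
        intro i hi
        simp only [Finset.mem_range] at hi
        have h1 : a + b - (a + i) = b - i := by omega
        have h2 : (a + i) + (b - i) = a + b := by omega
        have h3 : (-1 : ℤ) ^ (a + b) = (-1) ^ (a + i) * (-1) ^ (b - i) := by
          rw [← pow_add, h2]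
        have h4 : ((-1 : ℤ) ^ (b - i)) * ((-1 : ℤ) ^ (b - i)) = 1 := by
          rw [← pow_add]
          exact Even.neg_one_pow ⟨b - i, by omega⟩
        rw [h1, h3]
        linear_combination (-((-1 : ℤ) ^ (a + i)) * ((a + i).choose a : ℤ)
          * (a.choose (b - i) : ℤ)) * h4
    _ = (-1 : ℤ) ^ (a + b) := by
        rw [← Finset.mul_sum, hkey, mul_one]

/-- Cardinality of coverings with fixed first set. -/
lemma inner_card {k a b : ℕ} (hak : a ≤ k) (hbk : b ≤ k) (hk : k ≤ a + b)
    (S : Finset (Fin k)) (hS : S.card = a) :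
    (Finset.univ.filter fun T : Finset (Fin k) => T.card = b ∧ S ∪ T = Finset.univ).card
      = a.choose (a + b - k) := by
  have hcompl : Sᶜ.card = k - a := by
    rw [Finset.card_compl, hS, Fintype.card_fin]
  have hpc : a.choose (a + b - k) = (Finset.powersetCard (a + b - k) S).card := by
    rw [Finset.card_powersetCard, hS]
  rw [hpc]
  apply Finset.card_bij' (fun T _ => T ∩ S) (fun U _ => U ∪ Sᶜ)
  · intro T hT
    simp only [Finset.mem_filter, Finset.mem_univ, true_and] at hT
    obtain ⟨hTb, hTS⟩ := hT
    have hsc : Sᶜ ⊆ T := by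
      intro x hx
      rw [Finset.mem_compl] at hx
      have : x ∈ S ∪ T := by rw [hTS]; exact Finset.mem_univ x
      rw [Finset.mem_union] at this
      tauto
    have hdisj : Disjoint (T ∩ S) Sᶜ := by
      apply Finset.disjoint_left.mpr
      intro x hx
      rw [Finset.mem_inter] at hx
      rw [Finset.mem_compl]
      exact fun h => h hx.2
    have hunion : (T ∩ S) ∪ Sᶜ = T := by
      ext x
      simp only [Finset.mem_union, Finset.mem_inter, Finset.mem_compl]
      constructor
      · rintro (⟨h1, _⟩ | h1)
        · exact h1
        · exact hsc (Finset.mem_compl.mpr h1)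
      · intro hx
        by_cases hxS : x ∈ S
        · exact Or.inl ⟨hx, hxS⟩
        · exact Or.inr hxS
    have hcard : (T ∩ S).card + Sᶜ.card = T.card := by
      rw [← Finset.card_union_of_disjoint hdisj, hunion]
    rw [Finset.mem_powersetCard]
    constructor
    · exact Finset.inter_subset_right
    · omega
  · intro U hU
    rw [Finset.mem_powersetCard] at hU
    obtain ⟨hUS, hUc⟩ := hU
    simp only [Finset.mem_filter, Finset.mem_univ, true_and]
    have hdisj : Disjoint U Sᶜ := by
      apply Finset.disjoint_left.mpr
      intro x hx
      rw [Finset.mem_compl]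
      exact fun h => h (hUS hx)
    constructor
    · rw [Finset.card_union_of_disjoint hdisj, hUc, hcompl]
      omega
    · ext x
      simp only [Finset.mem_union, Finset.mem_compl, Finset.mem_univ, iff_true]
      by_cases hxS : x ∈ S
      · exact Or.inl hxS
      · exact Or.inr (Or.inr hxS)
  · intro T hT
    simp only [Finset.mem_filter, Finset.mem_univ, true_and] at hT
    obtain ⟨hTb, hTS⟩ := hT
    have hsc : Sᶜ ⊆ T := by
      intro x hx
      rw [Finset.mem_compl] at hx
      have : x ∈ S ∪ T := by rw [hTS]; exact Finset.mem_univ x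
      rw [Finset.mem_union] at this
      tauto
    ext x
    simp only [Finset.mem_union, Finset.mem_inter, Finset.mem_compl]
    constructor
    · rintro (⟨h1, _⟩ | h1)
      · exact h1
      · exact hsc (Finset.mem_compl.mpr h1)
    · intro hx
      by_cases hxS : x ∈ S
      · exact Or.inl ⟨hx, hxS⟩
      · exact Or.inr hxS
  · intro U hU
    rw [Finset.mem_powersetCard] at hU
    obtain ⟨hUS, _⟩ := hU
    ext x
    simp only [Finset.mem_inter, Finset.mem_union, Finset.mem_compl]
    constructor
    · rintro ⟨h1 | h1, h2⟩
      · exact h1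
      · exact absurd h2 h1
    · intro hx
      exact ⟨Or.inl hx, hUS hx⟩

/-- Cardinality of the covering-pairs set. -/
lemma pair_card {k a b : ℕ} (hak : a ≤ k) (hbk : b ≤ k) (hk : k ≤ a + b) :
    (Finset.univ.filter
        (fun p : Finset (Fin k) × Finset (Fin k) =>
          p.1.card = a ∧ p.2.card = b ∧ p.1 ∪ p.2 = Finset.univ)).card
      = k.choose a * a.choose (a + b - k) := by
  rw [Finset.card_eq_sum_card_fiberwise
    (f := fun p : Finset (Fin k) × Finset (Fin k) => p.1)
    (t := Finset.univ.powersetCard a)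
    (by
      intro p hp
      simp only [Finset.mem_coe, Finset.mem_filter, Finset.mem_univ, true_and] at hp
      rw [Finset.mem_coe, Finset.mem_powersetCard]
      exact ⟨Finset.subset_univ _, hp.1⟩)]
  have hfiber : ∀ S ∈ Finset.univ.powersetCard a,
      ((Finset.univ.filter
        (fun p : Finset (Fin k) × Finset (Fin k) =>
          p.1.card = a ∧ p.2.card = b ∧ p.1 ∪ p.2 = Finset.univ)).filter
        (fun p => p.1 = S)).card = a.choose (a + b - k) := by
    intro S hS
    rw [Finset.mem_powersetCard] at hS
    rw [← inner_card hak hbk hk S hS.2]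
    refine Finset.card_bij' (fun p _ => p.2) (fun T _ => (S, T)) ?_ ?_ ?_ ?_
    · intro p hp
      rw [Finset.mem_filter] at hp
      obtain ⟨hp1, hp2⟩ := hp
      rw [Finset.mem_filter] at hp1
      obtain ⟨-, h1, h2, h3⟩ := hp1
      rw [Finset.mem_filter]
      refine ⟨Finset.mem_univ _, h2, ?_⟩
      show S ∪ p.2 = univ
      rw [← hp2]
      exact h3
    · intro T hT
      rw [Finset.mem_filter] at hT
      obtain ⟨-, hT1, hT2⟩ := hT
      rw [Finset.mem_filter]
      exact ⟨Finset.mem_filter.mpr ⟨Finset.mem_univ _, hS.2, hT1, hT2⟩, rfl⟩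
    · intro p hp
      rw [Finset.mem_filter] at hp
      show (S, p.2) = p
      rw [← hp.2]
    · intro T hT
      rfl
  rw [Finset.sum_congr rfl hfiber, Finset.sum_const, Finset.card_powersetCard,
    Finset.card_univ, Fintype.card_fin, smul_eq_mul]

theorem signed_covering_pairs_sum (k' k'' : ℕ) :
    (∑ k ∈ Finset.Icc (max k' k'') (k' + k''),
        (-1 : ℤ) ^ k *
          ((Finset.univ.filter
              (fun p : Finset (Fin k) × Finset (Fin k) =>
                p.1.card = k' ∧ p.2.card = k'' ∧ p.1 ∪ p.2 = Finset.univ)).card : ℤ)) =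
      (-1 : ℤ) ^ (k' + k'') := by
  rw [← int_identity k' k'']
  apply Finset.sum_congr rfl
  intro k hk
  simp only [Finset.mem_Icc, max_le_iff] at hk
  rw [pair_card hk.1.1 hk.1.2 hk.2]
  push_cast
  ring
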